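/- If I, J, K are subsets of {1,...,n} with I ∩ J ∩ K ≠ ∅ or I^c ∩ J^c ∩ K^c ≠ ∅, then L̃₂(e_I·v_I, e_J·v_I) · e_K·v_I = 0; and if I ∩ J ∩ K = ∅ and I^c ∩ J^c ∩ K^c = ∅, then L̃₂(e_I·v_I, e_J·v_I) · e_K·v_I is a scalar multiple of the basis pure spinor e_M·v_I where M = (I∩J) ∪ (J∩K) ∪ (K∩I). -/

import Mathlib

open CliffordAlgebra

/-- The ordered product `e_{p₁} ⋯ e_{p_k}` in the Clifford algebra, for a
subset `P = {p₁ < ⋯ < p_k}` of `{1, …, n}`. -/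
def prodE {k V : Type*} [Field k] [AddCommGroup V] [Module k V] {n : ℕ}
    (Q : QuadraticForm k V) (eB : Fin n → V) (P : Finset (Fin n)) :
    CliffordAlgebra Q :=
  ((P.sort (· ≤ ·)).map fun p => ι Q (eB p)).prod

section Aux

variable {k V S : Type*} [Field k] [AddCommGroup V] [Module k V]
  [AddCommGroup S] [Module k S] {n : ℕ}
  {g : LinearMap.BilinForm k V} {Q : QuadraticForm k V}
  (hsymm : ∀ v w, g v w = g w v)
  (hQ : ∀ v, Q v = g v v)
  {iB eB : Fin n → V}
  (hii : ∀ a b, g (iB a) (iB b) = 0)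
  (hee : ∀ a b, g (eB a) (eB b) = 0)
  (hei : ∀ a b, g (eB a) (iB b) = if a = b then (2 : k)⁻¹ else 0)
  (h2 : (2 : k) ≠ 0)
  {ρ : CliffordAlgebra Q ≃ₐ[k] Module.End k S} {v0 : S}
  (hv0 : ∀ a, ρ (ι Q (iB a)) v0 = 0)
  {B : S →ₗ[k] S →ₗ[k] k}
  (hB : ∀ (v : V) (φ ψ : S), B (ρ (ι Q v) φ) ψ = B φ (ρ (ι Q v) ψ))

/-- list product of `e`'s -/
def prodL (Q : QuadraticForm k V) (eB : Fin n → V) (l : List (Fin n)) :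
    CliffordAlgebra Q :=
  (l.map fun p => ι Q (eB p)).prod

lemma prodE_eq (X : Finset (Fin n)) : prodE Q eB X = prodL Q eB (X.sort (· ≤ ·)) := rfl

include hsymm hQ in
lemma polar_eq (v w : V) : QuadraticMap.polar Q v w = 2 * g v w := by
  simp only [QuadraticMap.polar, hQ]
  simp only [map_add, LinearMap.add_apply]
  rw [hsymm w v]; ring

include hsymm hQ hee in
lemma ee_anticomm (a b : Fin n) :
    ι Q (eB a) * ι Q (eB b) = -(ι Q (eB b) * ι Q (eB a))  := by
  have := ι_mul_ι_comm (Q := Q) (eB a) (eB b)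
  rwa [polar_eq hsymm hQ, hee, mul_zero, map_zero, zero_sub] at this

include hsymm hQ hii in
lemma ii_anticomm (a b : Fin n) :
    ι Q (iB a) * ι Q (iB b) = -(ι Q (iB b) * ι Q (iB a))  := by
  have := ι_mul_ι_comm (Q := Q) (iB a) (iB b)
  rwa [polar_eq hsymm hQ, hii, mul_zero, map_zero, zero_sub] at this

include hsymm hQ hei h2 in
lemma ie_comm (a b : Fin n) :
    ι Q (iB a) * ι Q (eB b) =
      algebraMap k _ (if b = a then 1 else 0) - ι Q (eB b) * ι Q (iB a) := by
  have := ι_mul_ι_comm (Q := Q) (iB a) (eB b)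
  rw [polar_eq hsymm hQ, hsymm, hei] at this
  rw [this]
  congr 1
  split
  · rw [mul_inv_cancel₀ h2]
  · rw [mul_zero]

include hsymm hQ hQ hee in
lemma e_mul_prodL_mem {a : Fin n} {l : List (Fin n)} (hal : a ∈ l) :
    ι Q (eB a) * prodL Q eB l = 0 := by
  induction l with
  | nil => simp at hal
  | cons b t ih =>
    have hexp : prodL Q eB (b :: t) = ι Q (eB b) * prodL Q eB t := by
      simp [prodL]
    rw [hexp, ← mul_assoc]
    rcases List.mem_cons.mp hal with h | h
    · subst h
      have h0 : ι Q (eB a) * ι Q (eB a) = 0 := by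
        have := ι_sq_scalar Q (eB a)
        rw [hQ, hee, map_zero] at this; exact this
      rw [h0, zero_mul]
    · rw [ee_anticomm hsymm hQ hee a b, neg_mul, mul_assoc, ih h, mul_zero, neg_zero]

include hsymm hQ hee in
lemma perm_smul {l l' : List (Fin n)} (h : l.Perm l') :
    ∃ s : k, prodL Q eB l = s • prodL Q eB l' := by
  induction h with
  | nil => exact ⟨1, by simp⟩
  | cons x _ ih =>
    obtain ⟨s, hs⟩ := ih
    refine ⟨s, ?_⟩
    simp only [prodL, List.map_cons, List.prod_cons] at hs ⊢
    rw [hs, mul_smul_comm]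
  | swap x y l =>
    refine ⟨-1, ?_⟩
    simp only [prodL, List.map_cons, List.prod_cons, ← mul_assoc]
    rw [ee_anticomm hsymm hQ hee y x]
    simp
  | trans _ _ ih1 ih2 =>
    obtain ⟨s, hs⟩ := ih1
    obtain ⟨t, ht⟩ := ih2
    exact ⟨s * t, by rw [hs, ht, smul_smul]⟩

include hsymm hQ hei h2 in
lemma i_mul_prodL_not_mem {a : Fin n} {l : List (Fin n)} (hal : a ∉ l) :
    ι Q (iB a) * prodL Q eB l = ((-1 : k) ^ l.length) • (prodL Q eB l * ι Q (iB a)) := by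
  induction l with
  | nil => simp [prodL]
  | cons b t ih =>
    have hab : b ≠ a := fun h => hal (h ▸ (List.mem_cons_self : b ∈ b :: t))
    have hat : a ∉ t := fun h => hal (List.mem_cons_of_mem _ h)
    have hexp : prodL Q eB (b :: t) = ι Q (eB b) * prodL Q eB t := by simp [prodL]
    rw [hexp, ← mul_assoc, ie_comm hsymm hQ hei h2 a b, if_neg hab, map_zero, zero_sub,
      neg_mul, mul_assoc, ih hat]
    rw [mul_smul_comm, ← mul_assoc, ← neg_smul, List.length_cons, pow_succ, mul_neg_one]

include hsymm hQ hei h2 in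
lemma i_mul_prodL_mem {a : Fin n} {l : List (Fin n)} (hnd : l.Nodup) (hal : a ∈ l) :
    ∃ s : k, ι Q (iB a) * prodL Q eB l =
      s • prodL Q eB (l.erase a) + ((-1 : k) ^ l.length) • (prodL Q eB l * ι Q (iB a)) := by
  induction l with
  | nil => simp at hal
  | cons b t ih =>
    have hexp : prodL Q eB (b :: t) = ι Q (eB b) * prodL Q eB t := by simp [prodL]
    rcases List.mem_cons.mp hal with h | h
    · subst h
      have hat : a ∉ t := (List.nodup_cons.mp hnd).1
      refine ⟨1, ?_⟩
      have herase : (a :: t).erase a = t := by simp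
      rw [hexp, ← mul_assoc, ie_comm hsymm hQ hei h2 a a, if_pos rfl, sub_mul, herase,
        map_one, one_mul, one_smul, mul_assoc, i_mul_prodL_not_mem hsymm hQ hei h2 hat,
        mul_smul_comm, ← mul_assoc, List.length_cons, pow_succ, mul_neg_one, neg_smul,
        ← sub_eq_add_neg]
    · have hab : b ≠ a := by
        rintro rfl; exact (List.nodup_cons.mp hnd).1 h
      obtain ⟨s, hs⟩ := ih (List.nodup_cons.mp hnd).2 h
      refine ⟨-s, ?_⟩
      rw [hexp, ← mul_assoc, ie_comm hsymm hQ hei h2 a b, if_neg hab, map_zero, zero_sub,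
        neg_mul, mul_assoc, hs]
      have herase : (b :: t).erase a = b :: t.erase a := List.erase_cons_tail (by simp [hab])
      rw [mul_add, herase]
      have h1 : prodL Q eB (b :: t.erase a) = ι Q (eB b) * prodL Q eB (t.erase a) := by
        simp [prodL]
      rw [h1, neg_add, mul_smul_comm, mul_smul_comm, ← mul_assoc, List.length_cons,
        pow_succ, mul_neg_one, neg_smul, neg_smul]

lemma rho_mul_apply (x y : CliffordAlgebra Q) (φ : S) : ρ (x * y) φ = ρ x (ρ y φ) := by
  rw [map_mul]; rfl

include hsymm hQ hee in
lemma psiE_mem {a : Fin n} {X : Finset (Fin n)} (h : a ∈ X) :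
    ρ (ι Q (eB a)) (ρ (prodE Q eB X) v0) = 0 := by
  rw [← rho_mul_apply, prodE_eq,
    e_mul_prodL_mem hsymm hQ hee ((Finset.mem_sort (· ≤ ·)).mpr h), map_zero,
    LinearMap.zero_apply]

include hsymm hQ hee in
lemma psiE_not_mem {a : Fin n} {X : Finset (Fin n)} (h : a ∉ X) :
    ∃ s : k, ρ (ι Q (eB a)) (ρ (prodE Q eB X) v0)
      = s • ρ (prodE Q eB (insert a X)) v0 := by
  have hperm : (a :: X.sort (· ≤ ·)).Perm ((insert a X).sort (· ≤ ·)) := by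
    rw [← Multiset.coe_eq_coe]
    show ((a :: X.sort (· ≤ ·) : List (Fin n)) : Multiset (Fin n)) = _
    rw [← Multiset.cons_coe, Finset.sort_eq, Finset.sort_eq, Finset.insert_val_of_notMem h]
  obtain ⟨s, hs⟩ := perm_smul hsymm hQ hee (k := k) hperm
  refine ⟨s, ?_⟩
  rw [← rho_mul_apply, prodE_eq]
  have : ι Q (eB a) * prodL Q eB (X.sort (· ≤ ·)) = prodL Q eB (a :: X.sort (· ≤ ·)) := by
    simp [prodL]
  rw [this, hs, map_smul, LinearMap.smul_apply, prodE_eq]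

include hsymm hQ hei h2 hv0 in
lemma psiI_not_mem {a : Fin n} {X : Finset (Fin n)} (h : a ∉ X) :
    ρ (ι Q (iB a)) (ρ (prodE Q eB X) v0) = 0 := by
  rw [← rho_mul_apply, prodE_eq,
    i_mul_prodL_not_mem hsymm hQ hei h2 (fun hm => h ((Finset.mem_sort (· ≤ ·)).mp hm)),
    map_smul, LinearMap.smul_apply, rho_mul_apply, hv0, map_zero, smul_zero]

include hsymm hQ hee hei h2 hv0 in
lemma psiI_mem {a : Fin n} {X : Finset (Fin n)} (h : a ∈ X) :
    ∃ s : k, ρ (ι Q (iB a)) (ρ (prodE Q eB X) v0)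
      = s • ρ (prodE Q eB (X.erase a)) v0 := by
  obtain ⟨s, hs⟩ := i_mul_prodL_mem hsymm hQ hei h2 (Finset.sort_nodup X (· ≤ ·))
    ((Finset.mem_sort (· ≤ ·)).mpr h)
  have hperm : ((X.sort (· ≤ ·)).erase a).Perm ((X.erase a).sort (· ≤ ·)) := by
    rw [← Multiset.coe_eq_coe]
    show (((X.sort (· ≤ ·)).erase a : List (Fin n)) : Multiset (Fin n)) = _
    rw [← Multiset.coe_erase, Finset.sort_eq, Finset.sort_eq, Finset.erase_val]
  obtain ⟨t, ht⟩ := perm_smul hsymm hQ hee (k := k) hperm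
  refine ⟨s * t, ?_⟩
  rw [← rho_mul_apply, prodE_eq, hs, map_add, map_smul, map_smul, LinearMap.add_apply,
    LinearMap.smul_apply, LinearMap.smul_apply, rho_mul_apply, hv0, map_zero, smul_zero,
    add_zero, ht, map_smul, LinearMap.smul_apply, smul_smul, prodE_eq]

include hsymm hQ hee in
lemma L1 (l : List (Fin n)) (Y : Finset (Fin n)) (h : ∀ a ∈ l, a ∉ Y) :
    ∃ s : k, ρ (prodL Q eB l) (ρ (prodE Q eB Y) v0)
      = s • ρ (prodE Q eB (Y ∪ l.toFinset)) v0 := by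
  induction l with
  | nil => exact ⟨1, by simp [prodL]⟩
  | cons b t ih =>
    obtain ⟨s, hs⟩ := ih (fun a ha => h a (List.mem_cons_of_mem _ ha))
    have hb : b ∉ Y := h b List.mem_cons_self
    have hexp : prodL Q eB (b :: t) = ι Q (eB b) * prodL Q eB t := by simp [prodL]
    rw [hexp, rho_mul_apply, hs, map_smul]
    by_cases hbm : b ∈ Y ∪ t.toFinset
    · refine ⟨0, ?_⟩
      rw [psiE_mem (ρ := ρ) (v0 := v0) hsymm hQ hee hbm, smul_zero, zero_smul]
    · obtain ⟨u, hu⟩ := psiE_not_mem (ρ := ρ) (v0 := v0) hsymm hQ hee hbm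
      refine ⟨s * u, ?_⟩
      rw [hu, smul_smul]
      congr 2
      rw [List.toFinset_cons, Finset.union_insert]

include hsymm hQ hee in
lemma L2 (l : List (Fin n)) (Y : Finset (Fin n)) (h : ∃ a ∈ l, a ∈ Y) :
    ρ (prodL Q eB l) (ρ (prodE Q eB Y) v0) = 0 := by
  induction l with
  | nil => simp at h
  | cons b t ih =>
    have hexp : prodL Q eB (b :: t) = ι Q (eB b) * prodL Q eB t := by simp [prodL]
    rw [hexp, rho_mul_apply]
    by_cases ht : ∃ a ∈ t, a ∈ Y
    · rw [ih ht, map_zero]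
    · obtain ⟨a, hal, haY⟩ := h
      have hab : a = b := by
        rcases List.mem_cons.mp hal with h' | h'
        · exact h'
        · exact absurd ⟨a, h', haY⟩ ht
      push_neg at ht
      obtain ⟨s, hs⟩ := L1 (ρ := ρ) (v0 := v0) hsymm hQ hee t Y ht
      rw [hs]
      simp only [map_smul]
      rw [psiE_mem (ρ := ρ) (v0 := v0) hsymm hQ hee (Finset.mem_union_left _ (hab ▸ haY)), smul_zero]

include hB in
lemma B_move (l : List (Fin n)) (φ χ : S) :
    B (ρ (prodL Q eB l) φ) χ = B φ (ρ (prodL Q eB l.reverse) χ) := by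
  induction l generalizing χ with
  | nil => simp [prodL]
  | cons b t ih =>
    have hexp : prodL Q eB (b :: t) = ι Q (eB b) * prodL Q eB t := by simp [prodL]
    have hexp2 : prodL Q eB ((b :: t).reverse) = prodL Q eB t.reverse * ι Q (eB b) := by
      simp [prodL]
    rw [hexp, rho_mul_apply, hB, ih, hexp2, rho_mul_apply]

include hsymm hQ hee hei h2 hv0 hB in
lemma B_v0 (Y : Finset (Fin n)) (hY : Y ≠ Finset.univ) :
    B v0 (ρ (prodE Q eB Y) v0) = 0 := by
  have hekg : Yᶜ ≠ (∅ : Finset (Fin n)) := fun hc => hY ((Finset.compl_eq_empty_iff Y).mp hc)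
  obtain ⟨a, ha⟩ := Finset.nonempty_iff_ne_empty.mpr hekg
  rw [Finset.mem_compl] at ha
  have key : ρ (prodE Q eB Y) v0
      = ρ (ι Q (iB a)) (ρ (ι Q (eB a)) (ρ (prodE Q eB Y) v0)) := by
    rw [← rho_mul_apply, ie_comm hsymm hQ hei h2 a a, if_pos rfl, map_one, map_sub, map_one,
      LinearMap.sub_apply, Module.End.one_apply, rho_mul_apply,
      psiI_not_mem hsymm hQ hei h2 hv0 ha, map_zero, sub_zero]
  rw [key, ← hB, hv0, map_zero, LinearMap.zero_apply]

include hsymm hQ hee hei h2 hv0 hB in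
lemma B_select (X Y : Finset (Fin n)) (hY : Y ≠ Xᶜ) :
    B (ρ (prodE Q eB X) v0) (ρ (prodE Q eB Y) v0) = 0 := by
  rw [prodE_eq (Q := Q) (eB := eB) X, B_move hB]
  by_cases hXY : (X ∩ Y).Nonempty
  · obtain ⟨a, ha⟩ := hXY
    rw [Finset.mem_inter] at ha
    rw [L2 hsymm hQ hee _ Y ⟨a, by
      rw [List.mem_reverse, Finset.mem_sort]; exact ha.1, ha.2⟩, map_zero]
  · have hint : ∀ b ∈ (X.sort (· ≤ ·)).reverse, b ∉ Y := by
      intro b hb hbY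
      exact hXY ⟨b, Finset.mem_inter.mpr ⟨(Finset.mem_sort (· ≤ ·)).mp (List.mem_reverse.mp hb), hbY⟩⟩
    obtain ⟨s, hs⟩ := L1 (ρ := ρ) (v0 := v0) hsymm hQ hee ((X.sort (· ≤ ·)).reverse) Y hint
    rw [hs]
    simp only [map_smul]
    have htf : (X.sort (· ≤ ·)).reverse.toFinset = X := by
      rw [List.toFinset_reverse, Finset.sort_toFinset]
    rw [htf]
    have hne : Y ∪ X ≠ Finset.univ := by
      intro hun
      apply hY
      ext b
      rw [Finset.mem_compl]
      constructor
      · intro hbY hbX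
        exact hXY ⟨b, Finset.mem_inter.mpr ⟨hbX, hbY⟩⟩
      · intro hbX
        rcases Finset.mem_union.mp (hun ▸ Finset.mem_univ b) with h' | h'
        · exact h'
        · exact absurd h' hbX
    rw [B_v0 hsymm hQ hee hei h2 hv0 hB _ hne, smul_zero]

include hsymm hQ hee hei h2 hv0 hB in
lemma term1 (I J K : Finset (Fin n)) {p q : Fin n} (hpq : p ≠ q) :
    ((I ∩ J ∩ K ≠ ∅ ∨ Iᶜ ∩ Jᶜ ∩ Kᶜ ≠ ∅) →
      B (ρ (ι Q (eB p) * ι Q (eB q)) (ρ (prodE Q eB I) v0)) (ρ (prodE Q eB J) v0) •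
        ρ (ι Q (iB p) * ι Q (iB q)) (ρ (prodE Q eB K) v0) = 0) ∧
    B (ρ (ι Q (eB p) * ι Q (eB q)) (ρ (prodE Q eB I) v0)) (ρ (prodE Q eB J) v0) •
        ρ (ι Q (iB p) * ι Q (iB q)) (ρ (prodE Q eB K) v0) ∈
      Submodule.span k {ρ (prodE Q eB ((I ∩ J) ∪ (J ∩ K) ∪ (K ∩ I))) v0} := by
  rw [rho_mul_apply, rho_mul_apply]
  by_cases hqI : q ∈ I
  · rw [psiE_mem hsymm hQ hee hqI]
    simp
  obtain ⟨s1, hs1⟩ := psiE_not_mem (ρ := ρ) (v0 := v0) hsymm hQ hee hqI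
  by_cases hpI : p ∈ insert q I
  · rw [hs1, map_smul, psiE_mem hsymm hQ hee hpI]
    simp
  obtain ⟨s2, hs2⟩ := psiE_not_mem (ρ := ρ) (v0 := v0) hsymm hQ hee hpI
  rw [hs1, map_smul, hs2]
  simp only [map_smul, LinearMap.smul_apply, smul_eq_mul]
  by_cases hJ : J = (insert p (insert q I))ᶜ
  swap
  · rw [B_select hsymm hQ hee hei h2 hv0 hB _ _ hJ]
    simp
  by_cases hqK : q ∈ K
  swap
  · rw [psiI_not_mem hsymm hQ hei h2 hv0 hqK]
    simp
  obtain ⟨t1, ht1⟩ := psiI_mem (ρ := ρ) (v0 := v0) hsymm hQ hee hei h2 hv0 hqK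
  rw [ht1, map_smul]
  by_cases hpK : p ∈ K.erase q
  swap
  · rw [psiI_not_mem hsymm hQ hei h2 hv0 hpK]
    simp
  obtain ⟨t2, ht2⟩ := psiI_mem (ρ := ρ) (v0 := v0) hsymm hQ hee hei h2 hv0 hpK
  rw [ht2]
  have hpK' : p ∈ K := Finset.mem_of_mem_erase hpK
  have hpI' : p ∉ I := fun h => hpI (Finset.mem_insert_of_mem h)
  constructor
  · intro H
    exfalso
    rcases H with h | h
    · obtain ⟨x, hx⟩ := Finset.nonempty_iff_ne_empty.mpr h
      subst hJ
      simp only [Finset.mem_inter, Finset.mem_compl, Finset.mem_insert, not_or] at hx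
      exact hx.1.2.2.2 hx.1.1
    · obtain ⟨x, hx⟩ := Finset.nonempty_iff_ne_empty.mpr h
      subst hJ
      simp only [Finset.mem_inter, Finset.mem_compl, compl_compl, Finset.mem_insert,
        not_not] at hx
      obtain ⟨⟨hxI, hxJ⟩, hxK⟩ := hx
      rcases hxJ with rfl | rfl | h
      · exact hxK hpK'
      · exact hxK hqK
      · exact hxI h
  · have hset : (K.erase q).erase p = (I ∩ J) ∪ (J ∩ K) ∪ (K ∩ I) := by
      subst hJ
      ext x
      simp only [Finset.mem_erase, Finset.mem_union, Finset.mem_inter, Finset.mem_compl,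
        Finset.mem_insert, not_or]
      constructor
      · rintro ⟨hxp, hxq, hxK⟩
        by_cases hxI : x ∈ I
        · exact Or.inr ⟨hxK, hxI⟩
        · exact Or.inl (Or.inr ⟨⟨hxp, hxq, hxI⟩, hxK⟩)
      · rintro ((⟨hxI, hxp, hxq, hxI'⟩ | ⟨⟨hxp, hxq, hxI⟩, hxK⟩) | ⟨hxK, hxI⟩)
        · exact absurd hxI hxI'
        · exact ⟨hxp, hxq, hxK⟩
        · exact ⟨fun h => hpI' (h ▸ hxI), fun h => hqI (h ▸ hxI), hxK⟩
    rw [hset]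
    apply Submodule.smul_mem
    apply Submodule.smul_mem
    apply Submodule.smul_mem
    exact Submodule.mem_span_singleton_self _

include hsymm hQ hee hei h2 hv0 hB in
lemma term2 (I J K : Finset (Fin n)) {p q : Fin n} (hpq : p ≠ q) :
    ((I ∩ J ∩ K ≠ ∅ ∨ Iᶜ ∩ Jᶜ ∩ Kᶜ ≠ ∅) →
      B (ρ (ι Q (iB p) * ι Q (iB q)) (ρ (prodE Q eB I) v0)) (ρ (prodE Q eB J) v0) •
        ρ (ι Q (eB p) * ι Q (eB q)) (ρ (prodE Q eB K) v0) = 0) ∧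
    B (ρ (ι Q (iB p) * ι Q (iB q)) (ρ (prodE Q eB I) v0)) (ρ (prodE Q eB J) v0) •
        ρ (ι Q (eB p) * ι Q (eB q)) (ρ (prodE Q eB K) v0) ∈
      Submodule.span k {ρ (prodE Q eB ((I ∩ J) ∪ (J ∩ K) ∪ (K ∩ I))) v0} := by
  rw [rho_mul_apply, rho_mul_apply]
  by_cases hqI : q ∈ I
  swap
  · rw [psiI_not_mem hsymm hQ hei h2 hv0 hqI]
    simp
  obtain ⟨s1, hs1⟩ := psiI_mem (ρ := ρ) (v0 := v0) hsymm hQ hee hei h2 hv0 hqI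
  by_cases hpI : p ∈ I.erase q
  swap
  · rw [hs1, map_smul, psiI_not_mem hsymm hQ hei h2 hv0 hpI]
    simp
  obtain ⟨s2, hs2⟩ := psiI_mem (ρ := ρ) (v0 := v0) hsymm hQ hee hei h2 hv0 hpI
  rw [hs1, map_smul, hs2]
  simp only [map_smul, LinearMap.smul_apply, smul_eq_mul]
  by_cases hJ : J = ((I.erase q).erase p)ᶜ
  swap
  · rw [B_select hsymm hQ hee hei h2 hv0 hB _ _ hJ]
    simp
  by_cases hqK : q ∈ K
  · rw [psiE_mem hsymm hQ hee hqK]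
    simp
  obtain ⟨t1, ht1⟩ := psiE_not_mem (ρ := ρ) (v0 := v0) hsymm hQ hee hqK
  rw [ht1, map_smul]
  by_cases hpK : p ∈ insert q K
  · rw [psiE_mem hsymm hQ hee hpK]
    simp
  obtain ⟨t2, ht2⟩ := psiE_not_mem (ρ := ρ) (v0 := v0) hsymm hQ hee hpK
  rw [ht2]
  have hpI' : p ∈ I := Finset.mem_of_mem_erase hpI
  have hpK' : p ∉ K := fun h => hpK (Finset.mem_insert_of_mem h)
  have hJmem : ∀ x, x ∈ J ↔ (x = p ∨ x = q ∨ x ∉ I) := by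
    subst hJ
    intro x
    simp only [Finset.mem_compl, Finset.mem_erase]
    tauto
  constructor
  · intro H
    exfalso
    rcases H with h | h
    · obtain ⟨x, hx⟩ := Finset.nonempty_iff_ne_empty.mpr h
      simp only [Finset.mem_inter] at hx
      obtain ⟨⟨hxI, hxJ⟩, hxK⟩ := hx
      rcases (hJmem x).mp hxJ with rfl | rfl | h'
      · exact hpK' hxK
      · exact hqK hxK
      · exact h' hxI
    · obtain ⟨x, hx⟩ := Finset.nonempty_iff_ne_empty.mpr h
      simp only [Finset.mem_inter, Finset.mem_compl] at hx
      obtain ⟨⟨hxI, hxJ⟩, _⟩ := hx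
      exact hxJ ((hJmem x).mpr (Or.inr (Or.inr hxI)))
  · have hset : insert p (insert q K) = (I ∩ J) ∪ (J ∩ K) ∪ (K ∩ I) := by
      ext x
      simp only [Finset.mem_insert, Finset.mem_union, Finset.mem_inter, hJmem]
      constructor
      · rintro (rfl | rfl | hxK)
        · exact Or.inl (Or.inl ⟨hpI', Or.inl rfl⟩)
        · exact Or.inl (Or.inl ⟨hqI, Or.inr (Or.inl rfl)⟩)
        · by_cases hxI : x ∈ I
          · exact Or.inr ⟨hxK, hxI⟩
          · exact Or.inl (Or.inr ⟨Or.inr (Or.inr hxI), hxK⟩)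
      · rintro ((⟨hxI, (rfl | rfl | hxI')⟩ | ⟨_, hxK⟩) | ⟨hxK, _⟩)
        · exact Or.inl rfl
        · exact Or.inr (Or.inl rfl)
        · exact absurd hxI hxI'
        · exact Or.inr (Or.inr hxK)
        · exact Or.inr (Or.inr hxK)
    rw [hset]
    apply Submodule.smul_mem
    apply Submodule.smul_mem
    apply Submodule.smul_mem
    exact Submodule.mem_span_singleton_self _

include hsymm hQ hee hei h2 hv0 hB in
lemma term3 (I J K : Finset (Fin n)) {p q : Fin n} (hpq : p ≠ q) :
    ((I ∩ J ∩ K ≠ ∅ ∨ Iᶜ ∩ Jᶜ ∩ Kᶜ ≠ ∅) →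
      B (ρ (ι Q (eB p) * ι Q (iB q)) (ρ (prodE Q eB I) v0)) (ρ (prodE Q eB J) v0) •
        ρ (ι Q (iB p) * ι Q (eB q) - ι Q (eB q) * ι Q (iB p)) (ρ (prodE Q eB K) v0) = 0) ∧
    B (ρ (ι Q (eB p) * ι Q (iB q)) (ρ (prodE Q eB I) v0)) (ρ (prodE Q eB J) v0) •
        ρ (ι Q (iB p) * ι Q (eB q) - ι Q (eB q) * ι Q (iB p)) (ρ (prodE Q eB K) v0) ∈
      Submodule.span k {ρ (prodE Q eB ((I ∩ J) ∪ (J ∩ K) ∪ (K ∩ I))) v0} := by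
  rw [rho_mul_apply, map_sub, LinearMap.sub_apply, rho_mul_apply, rho_mul_apply]
  by_cases hqI : q ∈ I
  swap
  · rw [psiI_not_mem hsymm hQ hei h2 hv0 hqI]
    simp
  obtain ⟨s1, hs1⟩ := psiI_mem (ρ := ρ) (v0 := v0) hsymm hQ hee hei h2 hv0 hqI
  by_cases hpI : p ∈ I.erase q
  · rw [hs1, map_smul, psiE_mem hsymm hQ hee hpI]
    simp
  obtain ⟨s2, hs2⟩ := psiE_not_mem (ρ := ρ) (v0 := v0) hsymm hQ hee hpI
  rw [hs1, map_smul, hs2]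
  simp only [map_smul, LinearMap.smul_apply, smul_eq_mul]
  by_cases hJ : J = (insert p (I.erase q))ᶜ
  swap
  · rw [B_select hsymm hQ hee hei h2 hv0 hB _ _ hJ]
    simp
  by_cases hqK : q ∈ K
  · rw [psiE_mem hsymm hQ hee hqK]
    by_cases hpK : p ∈ K
    · obtain ⟨u1, hu1⟩ := psiI_mem (ρ := ρ) (v0 := v0) hsymm hQ hee hei h2 hv0 hpK
      rw [hu1, map_smul,
        psiE_mem hsymm hQ hee (Finset.mem_erase.mpr ⟨hpq.symm, hqK⟩)]
      simp
    · rw [psiI_not_mem hsymm hQ hei h2 hv0 hpK]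
      simp
  obtain ⟨t1, ht1⟩ := psiE_not_mem (ρ := ρ) (v0 := v0) hsymm hQ hee hqK
  rw [ht1, map_smul]
  by_cases hpK : p ∈ K
  swap
  · rw [psiI_not_mem hsymm hQ hei h2 hv0 hpK,
      psiI_not_mem hsymm hQ hei h2 hv0
        (fun h => (Finset.mem_insert.mp h).elim (fun h' => hpq h') hpK)]
    simp
  obtain ⟨t2, ht2⟩ := psiI_mem (ρ := ρ) (v0 := v0) hsymm hQ hee hei h2 hv0
    (Finset.mem_insert_of_mem hpK : p ∈ insert q K)
  obtain ⟨u1, hu1⟩ := psiI_mem (ρ := ρ) (v0 := v0) hsymm hQ hee hei h2 hv0 hpK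
  rw [ht2, hu1, map_smul]
  have hqK' : q ∉ K.erase p := fun h => hqK (Finset.mem_of_mem_erase h)
  obtain ⟨u2, hu2⟩ := psiE_not_mem (ρ := ρ) (v0 := v0) hsymm hQ hee hqK'
  rw [hu2]
  have hswap : (insert q K).erase p = insert q (K.erase p) := by
    ext x
    simp only [Finset.mem_erase, Finset.mem_insert]
    constructor
    · rintro ⟨hxp, rfl | hxK⟩
      · exact Or.inl rfl
      · exact Or.inr ⟨hxp, hxK⟩
    · rintro (rfl | ⟨hxp, hxK⟩)
      · exact ⟨hpq.symm, Or.inl rfl⟩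
      · exact ⟨hxp, Or.inr hxK⟩
  rw [hswap]
  have hpI' : p ∉ I := fun h => hpI (Finset.mem_erase.mpr ⟨hpq, h⟩)
  have hJmem : ∀ x, x ∈ J ↔ (x ≠ p ∧ (x = q ∨ x ∉ I)) := by
    subst hJ
    intro x
    simp only [Finset.mem_compl, Finset.mem_insert, Finset.mem_erase]
    tauto
  constructor
  · intro H
    exfalso
    rcases H with h | h
    · obtain ⟨x, hx⟩ := Finset.nonempty_iff_ne_empty.mpr h
      simp only [Finset.mem_inter] at hx
      obtain ⟨⟨hxI, hxJ⟩, hxK⟩ := hx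
      rcases ((hJmem x).mp hxJ).2 with rfl | h'
      · exact hqK hxK
      · exact h' hxI
    · obtain ⟨x, hx⟩ := Finset.nonempty_iff_ne_empty.mpr h
      simp only [Finset.mem_inter, Finset.mem_compl] at hx
      obtain ⟨⟨hxI, hxJ⟩, hxK⟩ := hx
      by_cases hxp : x = p
      · exact hxK (hxp ▸ hpK)
      · exact hxJ ((hJmem x).mpr ⟨hxp, Or.inr hxI⟩)
  · have hset : insert q (K.erase p) = (I ∩ J) ∪ (J ∩ K) ∪ (K ∩ I) := by
      ext x
      simp only [Finset.mem_insert, Finset.mem_erase, Finset.mem_union, Finset.mem_inter,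
        hJmem]
      constructor
      · rintro (rfl | ⟨hxp, hxK⟩)
        · exact Or.inl (Or.inl ⟨hqI, hpq.symm, Or.inl rfl⟩)
        · by_cases hxI : x ∈ I
          · exact Or.inr ⟨hxK, hxI⟩
          · exact Or.inl (Or.inr ⟨⟨hxp, Or.inr hxI⟩, hxK⟩)
      · rintro ((⟨hxI, _, (rfl | hxI')⟩ | ⟨⟨hxp, _⟩, hxK⟩) | ⟨hxK, hxI⟩)
        · exact Or.inl rfl
        · exact absurd hxI hxI'
        · exact Or.inr ⟨hxp, hxK⟩
        · exact Or.inr ⟨fun h => hpI' (h ▸ hxI), hxK⟩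
    rw [hset]
    apply Submodule.smul_mem
    apply Submodule.sub_mem
    · apply Submodule.smul_mem
      apply Submodule.smul_mem
      exact Submodule.mem_span_singleton_self _
    · apply Submodule.smul_mem
      apply Submodule.smul_mem
      exact Submodule.mem_span_singleton_self _

include hsymm hQ hee hei h2 hv0 in
lemma diag_act (a : Fin n) (X : Finset (Fin n)) :
    ∃ w : k, ρ (ι Q (iB a) * ι Q (eB a) - ι Q (eB a) * ι Q (iB a)) (ρ (prodE Q eB X) v0)
      = w • ρ (prodE Q eB X) v0 := by
  rw [map_sub, LinearMap.sub_apply, rho_mul_apply, rho_mul_apply]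
  by_cases haX : a ∈ X
  · rw [psiE_mem hsymm hQ hee haX, map_zero]
    obtain ⟨s1, hs1⟩ := psiI_mem (ρ := ρ) (v0 := v0) hsymm hQ hee hei h2 hv0 haX
    rw [hs1, map_smul]
    obtain ⟨s2, hs2⟩ := psiE_not_mem (ρ := ρ) (v0 := v0) hsymm hQ hee
      (Finset.notMem_erase a X)
    rw [hs2, Finset.insert_erase haX]
    exact ⟨-(s1 * s2), by rw [zero_sub, smul_smul, neg_smul]⟩
  · rw [psiI_not_mem hsymm hQ hei h2 hv0 haX, map_zero]
    obtain ⟨s1, hs1⟩ := psiE_not_mem (ρ := ρ) (v0 := v0) hsymm hQ hee haX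
    rw [hs1, map_smul]
    obtain ⟨s2, hs2⟩ := psiI_mem (ρ := ρ) (v0 := v0) hsymm hQ hee hei h2 hv0
      (Finset.mem_insert_self a X)
    rw [hs2, Finset.erase_insert haX]
    exact ⟨s1 * s2, by rw [sub_zero, smul_smul]⟩

include hsymm hQ hee hei h2 hv0 hB in
lemma term4 (I J K : Finset (Fin n)) (a : Fin n) :
    ((I ∩ J ∩ K ≠ ∅ ∨ Iᶜ ∩ Jᶜ ∩ Kᶜ ≠ ∅) →
      B (ρ (ι Q (eB a) * ι Q (iB a) - ι Q (iB a) * ι Q (eB a)) (ρ (prodE Q eB I) v0))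
          (ρ (prodE Q eB J) v0) •
        ρ (ι Q (iB a) * ι Q (eB a) - ι Q (eB a) * ι Q (iB a)) (ρ (prodE Q eB K) v0) = 0) ∧
    B (ρ (ι Q (eB a) * ι Q (iB a) - ι Q (iB a) * ι Q (eB a)) (ρ (prodE Q eB I) v0))
          (ρ (prodE Q eB J) v0) •
        ρ (ι Q (iB a) * ι Q (eB a) - ι Q (eB a) * ι Q (iB a)) (ρ (prodE Q eB K) v0) ∈
      Submodule.span k {ρ (prodE Q eB ((I ∩ J) ∪ (J ∩ K) ∪ (K ∩ I))) v0} := by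
  have hneg : ι Q (eB a) * ι Q (iB a) - ι Q (iB a) * ι Q (eB a)
      = -(ι Q (iB a) * ι Q (eB a) - ι Q (eB a) * ι Q (iB a)) := (neg_sub _ _).symm
  obtain ⟨w1, hw1⟩ := diag_act (ρ := ρ) (v0 := v0) hsymm hQ hee hei h2 hv0 a I
  obtain ⟨w2, hw2⟩ := diag_act (ρ := ρ) (v0 := v0) hsymm hQ hee hei h2 hv0 a K
  rw [hneg, map_neg, LinearMap.neg_apply, hw1, hw2]
  simp only [map_neg, map_smul, LinearMap.neg_apply, LinearMap.smul_apply, smul_eq_mul]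
  by_cases hJ : J = Iᶜ
  swap
  · rw [B_select hsymm hQ hee hei h2 hv0 hB _ _ hJ]
    simp
  constructor
  · intro H
    exfalso
    rcases H with h | h
    · obtain ⟨x, hx⟩ := Finset.nonempty_iff_ne_empty.mpr h
      subst hJ
      simp only [Finset.mem_inter, Finset.mem_compl] at hx
      exact hx.1.2 hx.1.1
    · obtain ⟨x, hx⟩ := Finset.nonempty_iff_ne_empty.mpr h
      subst hJ
      simp only [Finset.mem_inter, Finset.mem_compl, not_not] at hx
      exact hx.1.1 hx.1.2
  · have hset : K = (I ∩ J) ∪ (J ∩ K) ∪ (K ∩ I) := by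
      subst hJ
      ext x
      simp only [Finset.mem_union, Finset.mem_inter, Finset.mem_compl]
      constructor
      · intro hxK
        by_cases hxI : x ∈ I
        · exact Or.inr ⟨hxK, hxI⟩
        · exact Or.inl (Or.inr ⟨hxI, hxK⟩)
      · rintro ((⟨hxI, hxI'⟩ | ⟨_, hxK⟩) | ⟨hxK, _⟩)
        · exact absurd hxI hxI'
        · exact hxK
        · exact hxK
    rw [← hset]
    apply Submodule.smul_mem
    apply Submodule.smul_mem
    exact Submodule.mem_span_singleton_self _

end Aux

theorem stmt17 {k V S : Type*} [Field k] [AddCommGroup V] [Module k V]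
    [FiniteDimensional k V] [AddCommGroup S] [Module k S] [FiniteDimensional k S]
    (n : ℕ)
    (g : LinearMap.BilinForm k V) (Q : QuadraticForm k V)
    (h2 : (2 : k) ≠ 0)
    (hsymm : ∀ v w, g v w = g w v)
    (hdimV : Module.finrank k V = 2 * n)
    (hQ : ∀ v, Q v = g v v)
    -- a polarisation with dual bases
    (iB eB : Fin n → V)
    (hii : ∀ a b, g (iB a) (iB b) = 0)
    (hee : ∀ a b, g (eB a) (eB b) = 0)
    (hei : ∀ a b, g (eB a) (iB b) = if a = b then (2 : k)⁻¹ else 0)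
    (hspan : Submodule.span k (Set.range iB ∪ Set.range eB) = ⊤)
    -- the spinor representation
    (hdimS : Module.finrank k S = 2 ^ n)
    (ρ : CliffordAlgebra Q ≃ₐ[k] Module.End k S)
    -- a pure spinor annihilated by `I`
    (v0 : S) (hv0ne : v0 ≠ 0)
    (hv0 : ∀ a, ρ (ι Q (iB a)) v0 = 0)
    -- a nonzero spinor norm
    (B : S →ₗ[k] S →ₗ[k] k) (hBne : B ≠ 0)
    (hB : ∀ (v : V) (φ ψ : S), B (ρ (ι Q v) φ) ψ = B φ (ρ (ι Q v) ψ)) :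
    -- the operator `L̃₂` in isotropic coordinates
    letI L : S → S → CliffordAlgebra Q := fun ψ1 ψ2 =>
      (∑ p ∈ Finset.univ.filter (fun p : Fin n × Fin n => p.1 ≠ p.2),
        (B (ρ (ι Q (eB p.1) * ι Q (eB p.2)) ψ1) ψ2) • (ι Q (iB p.1) * ι Q (iB p.2)))
      + (∑ p ∈ Finset.univ.filter (fun p : Fin n × Fin n => p.1 ≠ p.2),
        (B (ρ (ι Q (iB p.1) * ι Q (iB p.2)) ψ1) ψ2) • (ι Q (eB p.1) * ι Q (eB p.2)))
      + (∑ p ∈ Finset.univ.filter (fun p : Fin n × Fin n => p.1 ≠ p.2),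
        (B (ρ (ι Q (eB p.1) * ι Q (iB p.2)) ψ1) ψ2) •
          (ι Q (iB p.1) * ι Q (eB p.2) - ι Q (eB p.2) * ι Q (iB p.1)))
      + (2 : k)⁻¹ • ∑ a : Fin n,
        (B (ρ (ι Q (eB a) * ι Q (iB a) - ι Q (iB a) * ι Q (eB a)) ψ1) ψ2) •
          (ι Q (iB a) * ι Q (eB a) - ι Q (eB a) * ι Q (iB a))
    ∀ I J K : Finset (Fin n), Disjoint I J → K = (I ∪ J)ᶜ →
    ∀ I J K : Finset (Fin n),
      ((I ∩ J ∩ K ≠ ∅ ∨ Iᶜ ∩ Jᶜ ∩ Kᶜ ≠ ∅) →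
        ρ (L (ρ (prodE Q eB I) v0) (ρ (prodE Q eB J) v0)) (ρ (prodE Q eB K) v0) = 0) ∧
      (I ∩ J ∩ K = ∅ → Iᶜ ∩ Jᶜ ∩ Kᶜ = ∅ →
        ∃ c : k,
          ρ (L (ρ (prodE Q eB I) v0) (ρ (prodE Q eB J) v0)) (ρ (prodE Q eB K) v0) =
            c • ρ (prodE Q eB ((I ∩ J) ∪ (J ∩ K) ∪ (K ∩ I))) v0) := by
  intro I0 J0 K0 _ _ I J K
  have hnorm : ρ ((∑ p ∈ Finset.univ.filter (fun p : Fin n × Fin n => p.1 ≠ p.2),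
        (B (ρ (ι Q (eB p.1) * ι Q (eB p.2)) (ρ (prodE Q eB I) v0)) (ρ (prodE Q eB J) v0)) •
          (ι Q (iB p.1) * ι Q (iB p.2)))
      + (∑ p ∈ Finset.univ.filter (fun p : Fin n × Fin n => p.1 ≠ p.2),
        (B (ρ (ι Q (iB p.1) * ι Q (iB p.2)) (ρ (prodE Q eB I) v0)) (ρ (prodE Q eB J) v0)) •
          (ι Q (eB p.1) * ι Q (eB p.2)))
      + (∑ p ∈ Finset.univ.filter (fun p : Fin n × Fin n => p.1 ≠ p.2),
        (B (ρ (ι Q (eB p.1) * ι Q (iB p.2)) (ρ (prodE Q eB I) v0)) (ρ (prodE Q eB J) v0)) •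
          (ι Q (iB p.1) * ι Q (eB p.2) - ι Q (eB p.2) * ι Q (iB p.1)))
      + (2 : k)⁻¹ • ∑ a : Fin n,
        (B (ρ (ι Q (eB a) * ι Q (iB a) - ι Q (iB a) * ι Q (eB a)) (ρ (prodE Q eB I) v0))
          (ρ (prodE Q eB J) v0)) •
          (ι Q (iB a) * ι Q (eB a) - ι Q (eB a) * ι Q (iB a))) (ρ (prodE Q eB K) v0)
      = (∑ p ∈ Finset.univ.filter (fun p : Fin n × Fin n => p.1 ≠ p.2),
        (B (ρ (ι Q (eB p.1) * ι Q (eB p.2)) (ρ (prodE Q eB I) v0)) (ρ (prodE Q eB J) v0)) •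
          ρ (ι Q (iB p.1) * ι Q (iB p.2)) (ρ (prodE Q eB K) v0))
      + (∑ p ∈ Finset.univ.filter (fun p : Fin n × Fin n => p.1 ≠ p.2),
        (B (ρ (ι Q (iB p.1) * ι Q (iB p.2)) (ρ (prodE Q eB I) v0)) (ρ (prodE Q eB J) v0)) •
          ρ (ι Q (eB p.1) * ι Q (eB p.2)) (ρ (prodE Q eB K) v0))
      + (∑ p ∈ Finset.univ.filter (fun p : Fin n × Fin n => p.1 ≠ p.2),
        (B (ρ (ι Q (eB p.1) * ι Q (iB p.2)) (ρ (prodE Q eB I) v0)) (ρ (prodE Q eB J) v0)) •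
          ρ (ι Q (iB p.1) * ι Q (eB p.2) - ι Q (eB p.2) * ι Q (iB p.1)) (ρ (prodE Q eB K) v0))
      + (2 : k)⁻¹ • ∑ a : Fin n,
        (B (ρ (ι Q (eB a) * ι Q (iB a) - ι Q (iB a) * ι Q (eB a)) (ρ (prodE Q eB I) v0))
          (ρ (prodE Q eB J) v0)) •
          ρ (ι Q (iB a) * ι Q (eB a) - ι Q (eB a) * ι Q (iB a)) (ρ (prodE Q eB K) v0) := by
    simp only [map_add, map_smul, map_sum, LinearMap.add_apply, LinearMap.smul_apply,
      LinearMap.sum_apply]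
  constructor
  · intro H
    rw [hnorm,
      Finset.sum_eq_zero (fun p hp =>
        (term1 hsymm hQ hee hei h2 hv0 hB I J K (Finset.mem_filter.mp hp).2).1 H),
      Finset.sum_eq_zero (fun p hp =>
        (term2 hsymm hQ hee hei h2 hv0 hB I J K (Finset.mem_filter.mp hp).2).1 H),
      Finset.sum_eq_zero (fun p hp =>
        (term3 hsymm hQ hee hei h2 hv0 hB I J K (Finset.mem_filter.mp hp).2).1 H),
      Finset.sum_eq_zero (fun a _ =>
        (term4 hsymm hQ hee hei h2 hv0 hB I J K a).1 H)]
    simp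
  · intro _ _
    have S1 : (∑ p ∈ Finset.univ.filter (fun p : Fin n × Fin n => p.1 ≠ p.2),
        (B (ρ (ι Q (eB p.1) * ι Q (eB p.2)) (ρ (prodE Q eB I) v0)) (ρ (prodE Q eB J) v0)) •
          ρ (ι Q (iB p.1) * ι Q (iB p.2)) (ρ (prodE Q eB K) v0)) ∈ Submodule.span k {ρ (prodE Q eB ((I ∩ J) ∪ (J ∩ K) ∪ (K ∩ I))) v0} :=
      Submodule.sum_mem _ (fun p hp =>
        (term1 hsymm hQ hee hei h2 hv0 hB I J K (Finset.mem_filter.mp hp).2).2)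
    have S2 : (∑ p ∈ Finset.univ.filter (fun p : Fin n × Fin n => p.1 ≠ p.2),
        (B (ρ (ι Q (iB p.1) * ι Q (iB p.2)) (ρ (prodE Q eB I) v0)) (ρ (prodE Q eB J) v0)) •
          ρ (ι Q (eB p.1) * ι Q (eB p.2)) (ρ (prodE Q eB K) v0)) ∈ Submodule.span k {ρ (prodE Q eB ((I ∩ J) ∪ (J ∩ K) ∪ (K ∩ I))) v0} :=
      Submodule.sum_mem _ (fun p hp =>
        (term2 hsymm hQ hee hei h2 hv0 hB I J K (Finset.mem_filter.mp hp).2).2)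
    have S3 : (∑ p ∈ Finset.univ.filter (fun p : Fin n × Fin n => p.1 ≠ p.2),
        (B (ρ (ι Q (eB p.1) * ι Q (iB p.2)) (ρ (prodE Q eB I) v0)) (ρ (prodE Q eB J) v0)) •
          ρ (ι Q (iB p.1) * ι Q (eB p.2) - ι Q (eB p.2) * ι Q (iB p.1))
            (ρ (prodE Q eB K) v0)) ∈ Submodule.span k {ρ (prodE Q eB ((I ∩ J) ∪ (J ∩ K) ∪ (K ∩ I))) v0} :=
      Submodule.sum_mem _ (fun p hp =>
        (term3 hsymm hQ hee hei h2 hv0 hB I J K (Finset.mem_filter.mp hp).2).2)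
    have S4 : ((2 : k)⁻¹ • ∑ a : Fin n,
        (B (ρ (ι Q (eB a) * ι Q (iB a) - ι Q (iB a) * ι Q (eB a)) (ρ (prodE Q eB I) v0))
          (ρ (prodE Q eB J) v0)) •
          ρ (ι Q (iB a) * ι Q (eB a) - ι Q (eB a) * ι Q (iB a))
            (ρ (prodE Q eB K) v0)) ∈ Submodule.span k {ρ (prodE Q eB ((I ∩ J) ∪ (J ∩ K) ∪ (K ∩ I))) v0} :=
      Submodule.smul_mem _ _ (Submodule.sum_mem _ (fun a _ =>
        (term4 hsymm hQ hee hei h2 hv0 hB I J K a).2))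
    have hmem := Submodule.add_mem _ (Submodule.add_mem _ (Submodule.add_mem _ S1 S2) S3) S4
    obtain ⟨c, hc⟩ := Submodule.mem_span_singleton.mp hmem
    exact ⟨c, by rw [hnorm, ← hc]⟩
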